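/- In the house allocation instance with three applicants a_1, a_2, a_3 and three projects p_1, p_2, p_3, where each project has lower and upper quota 3, and the preference lists are a_1 : p_1 ≻ p_2 ≻ p_3, a_2 : p_2 ≻ p_3 ≻ p_1, a_3 : p_3 ≻ p_1 ≻ p_2 (cyclic shifts of each other), no popular matching exists. -/

import Mathlib

open scoped Classical

/-- A house allocation instance with lower and upper quotas: applicants `A`,
projects `P`, acceptability `acc`, ranks `rk` (lower rank = more preferred),
and lower/upper quotas `lq`, `uq` for each project. -/
structure HA (A P : Type) where
  acc : A → P → Prop
  rk : A → P → ℕ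
  lq : P → ℕ
  uq : P → ℕ

namespace HA

variable {A P : Type} [Fintype A] [Fintype P]

/-- `I.Prefers a o₁ o₂` : applicant `a` strictly prefers assignment `o₁` to `o₂`
(`none` = being unmatched; every acceptable project is preferred to being unmatched). -/
def Prefers (I : HA A P) (a : A) : Option P → Option P → Prop
  | some p, some q => I.acc a p ∧ I.acc a q ∧ I.rk a p < I.rk a q
  | some p, none => I.acc a p
  | none, _ => False

/-- The set of applicants assigned to project `p` by `M`. -/
noncomputable def assigned (M : A → Option P) (p : P) : Finset A :=
  Finset.univ.filter fun a => M a = some p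

/-- `M` is a feasible matching: applicants are only assigned acceptable projects, and
every project is either closed (no assignees) or open with a number of assignees
between its lower and upper quota. -/
def IsMatching (I : HA A P) (M : A → Option P) : Prop :=
  (∀ a p, M a = some p → I.acc a p) ∧
  ∀ p : P, (assigned M p).card = 0 ∨
    (I.lq p ≤ (assigned M p).card ∧ (assigned M p).card ≤ I.uq p)

/-- `M'` is more popular than `M`. -/
def MorePopular (I : HA A P) (M' M : A → Option P) : Prop :=
  (Finset.univ.filter fun a => I.Prefers a (M a) (M' a)).card <
  (Finset.univ.filter fun a => I.Prefers a (M' a) (M a)).card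

/-- A popular matching. -/
def Popular (I : HA A P) (M : A → Option P) : Prop :=
  I.IsMatching M ∧ ∀ M', I.IsMatching M' → ¬ I.MorePopular M' M

/-- `M'` dominates `M`: no applicant is worse off and some applicant is better off. -/
def Dominates (I : HA A P) (M' M : A → Option P) : Prop :=
  (∀ a, ¬ I.Prefers a (M a) (M' a)) ∧ ∃ a, I.Prefers a (M' a) (M a)

/-- A Pareto optimal matching. -/
def ParetoOptimal (I : HA A P) (M : A → Option P) : Prop :=
  I.IsMatching M ∧ ∀ M', I.IsMatching M' → ¬ I.Dominates M' M

/-- A perfect matching: every applicant is matched. -/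
def Perfect (M : A → Option P) : Prop := ∀ a, M a ≠ none

/-- The weight of matching `M` w.r.t. integer edge weights `w`. -/
noncomputable def weight (w : A → P → ℤ) (M : A → Option P) : ℤ :=
  ∑ a, (M a).elim 0 (w a)

/-- Project `p` is open under `M`. -/
def OpenProj (M : A → Option P) (p : P) : Prop := ∃ a, M a = some p

/-- The number of projects opened by `M`. -/
noncomputable def opensCount (M : A → Option P) : ℕ :=
  (Finset.univ.filter fun p => OpenProj M p).card

/-- The number of projects closed by `M`. -/
noncomputable def closesCount (M : A → Option P) : ℕ :=
  (Finset.univ.filter fun p => ¬ OpenProj M p).card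

/-- The preferences of every applicant form a strict order on her acceptable projects. -/
def Strict (I : HA A P) : Prop :=
  ∀ a p q, I.acc a p → I.acc a q → I.rk a p = I.rk a q → p = q

end HA

/-- The instance of Observation 2: three applicants, three projects, each project with
lower and upper quota 3, and cyclically shifted preference lists:
`a₀ : p₀ ≻ p₁ ≻ p₂`, `a₁ : p₁ ≻ p₂ ≻ p₀`, `a₂ : p₂ ≻ p₀ ≻ p₁`. -/
def I1 : HA (Fin 3) (Fin 3) where
  acc _ _ := True
  rk a p := (p.val + 3 - a.val) % 3
  lq _ := 3
  uq _ := 3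


lemma const_isMatching (p : Fin 3) : I1.IsMatching (fun _ => some p) := by
  constructor
  · intro a q _; trivial
  · intro q
    by_cases h : q = p
    · right
      subst h
      have : HA.assigned (fun _ : Fin 3 => some q) q = Finset.univ := by
        ext a; simp [HA.assigned]
      rw [this]
      simp [I1]
    · left
      have : HA.assigned (fun _ : Fin 3 => some p) q = ∅ := by
        ext a; simp [HA.assigned, h, Ne.symm h]
      simp [this]

lemma matching_cases (M : Fin 3 → Option (Fin 3)) (hM : I1.IsMatching M) :
    (∀ a, M a = none) ∨ ∃ p, ∀ a, M a = some p := by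
  by_cases h : ∀ a, M a = none
  · exact Or.inl h
  · right
    push_neg at h
    obtain ⟨a, ha⟩ := h
    obtain ⟨p, hp⟩ := Option.ne_none_iff_exists'.mp ha
    refine ⟨p, ?_⟩
    have hmem : a ∈ HA.assigned M p := by simp [HA.assigned, hp]
    have hcard : (HA.assigned M p).card = 3 := by
      rcases hM.2 p with h0 | ⟨h1, h2⟩
      · exact absurd (Finset.card_eq_zero.mp h0 ▸ hmem) (Finset.notMem_empty a)
      · have h3 : I1.lq p = 3 := rfl
        have h4 : (HA.assigned M p).card ≤ 3 := by
          simpa using Finset.card_le_card (Finset.subset_univ (HA.assigned M p))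
        omega
    have huniv : HA.assigned M p = Finset.univ :=
      Finset.eq_univ_of_card _ (by simp [hcard])
    intro b
    have : b ∈ HA.assigned M p := huniv ▸ Finset.mem_univ b
    simpa [HA.assigned] using this

/-- In the house allocation instance with three applicants and three projects, each with
lower and upper quota 3, where the preference lists are cyclic shifts of one another,
no popular matching exists. -/
lemma beats (p : Fin 3) :
    I1.MorePopular (fun _ => some (p + 2)) (fun _ => some p) := by
  have key1 : ∀ p a : Fin 3, I1.Prefers a (some p) (some (p + 2)) ↔ a = p := by
    intro p a; fin_cases p <;> fin_cases a <;> simp [HA.Prefers, I1]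
  have key2 : ∀ p a : Fin 3, I1.Prefers a (some (p + 2)) (some p) ↔ a ≠ p := by
    intro p a; fin_cases p <;> fin_cases a <;> simp [HA.Prefers, I1]
  unfold HA.MorePopular
  have h1 : (Finset.univ.filter fun a : Fin 3 =>
      I1.Prefers a ((fun _ => some p) a) ((fun _ => some (p + 2)) a)) = {p} := by
    ext a; simp [key1 p a]
  have h2 : (Finset.univ.filter fun a : Fin 3 =>
      I1.Prefers a ((fun _ => some (p + 2)) a) ((fun _ => some p) a)) = Finset.univ.erase p := by
    ext a; simp [key2 p a]
  rw [h1, h2, Finset.card_erase_of_mem (Finset.mem_univ p)]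
  simp

theorem stmt_1 : ¬ ∃ M : Fin 3 → Option (Fin 3), I1.Popular M := by
  rintro ⟨M, hM, hpop⟩
  rcases matching_cases M hM with hnone | ⟨p, hp⟩
  · refine hpop (fun _ => some 0) (const_isMatching 0) ?_
    have h1 : (Finset.univ.filter fun a : Fin 3 => I1.Prefers a (M a) (some 0)) = ∅ := by
      ext a; rw [Finset.mem_filter, hnone a]; simp [HA.Prefers]
    have h2 : (Finset.univ.filter fun a : Fin 3 => I1.Prefers a (some 0) (M a)) = Finset.univ := by
      ext a; rw [Finset.mem_filter, hnone a]; simp [HA.Prefers, I1]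
    unfold HA.MorePopular
    rw [h1, h2]
    simp
  · have hMeq : M = fun _ => some p := funext hp
    subst hMeq
    exact hpop _ (const_isMatching (p + 2)) (beats p)
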